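/- Let H be a complex Hilbert space, let T : H →L[ℂ] H be a bounded self-adjoint operator that is positive (⟪T f, f⟫ ≥ 0 for all f) and injective, let τ > 0, s > 0, and 0 < ε ≤ 1/2. Then the operators T + s·I and T + (τ+s)·I are invertible, and for every g ∈ H, ‖T^{1/2} · ((T + s·I)⁻¹ − (T + (τ+s)·I)⁻¹) · T^ε g‖ ≤ τ^ε · ‖T^{1/2}((T + s·I)⁻¹ g)‖. -/

import Mathlib

section Aux

variable {H : Type*} [NormedAddCommGroup H] [InnerProductSpace ℂ H] [CompleteSpace H]

private lemma wrd_inverse_eq (T : H →L[ℂ] H) (hT : IsSelfAdjoint T)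
    (hS : ∀ t ∈ spectrum ℝ T, 0 ≤ t) (s : ℝ) (hs : 0 < s) :
    IsUnit (T + s • (1 : H →L[ℂ] H)) ∧
      Ring.inverse (T + s • (1 : H →L[ℂ] H)) = cfc (fun t : ℝ => (t + s)⁻¹) T := by
  have hne : ∀ t ∈ spectrum ℝ T, t + s ≠ 0 := fun t ht => by
    have := hS t ht; positivity
  have hcont : ContinuousOn (fun t : ℝ => (t + s)⁻¹) (spectrum ℝ T) :=
    ContinuousOn.inv₀ (by fun_prop) hne
  have heq : T + s • (1 : H →L[ℂ] H) = cfc (fun t : ℝ => t + s) T := by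
    rw [cfc_add _ _ _ (by fun_prop) (by fun_prop), cfc_id' ℝ T, cfc_const s T,
      Algebra.algebraMap_eq_smul_one]
  have h1 : cfc (fun t : ℝ => t + s) T * cfc (fun t : ℝ => (t + s)⁻¹) T = 1 := by
    rw [← cfc_mul _ _ _ (by fun_prop) hcont, ← cfc_one (R := ℝ) T]
    exact cfc_congr fun t ht => mul_inv_cancel₀ (hne t ht)
  have h2 : cfc (fun t : ℝ => (t + s)⁻¹) T * cfc (fun t : ℝ => t + s) T = 1 := by
    rw [← cfc_mul _ _ _ hcont (by fun_prop), ← cfc_one (R := ℝ) T]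
    exact cfc_congr fun t ht => inv_mul_cancel₀ (hne t ht)
  let u : (H →L[ℂ] H)ˣ := ⟨cfc (fun t : ℝ => t + s) T, cfc (fun t : ℝ => (t + s)⁻¹) T, h1, h2⟩
  constructor
  · rw [heq]; exact ⟨u, rfl⟩
  · rw [heq]
    have : (u : H →L[ℂ] H) = cfc (fun t : ℝ => t + s) T := rfl
    rw [← this, Ring.inverse_unit u]
    rfl

private lemma wrd_scalar_ineq (τ s ε t : ℝ) (hτ : 0 < τ) (hs : 0 < s) (hε0 : 0 < ε)
    (hε : ε ≤ 1 / 2) (ht : 0 ≤ t) :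
    τ * t ^ ε / (t + (τ + s)) ≤ τ ^ ε := by
  rw [div_le_iff₀ (by positivity)]
  have hgm : t ^ ε * τ ^ (1 - ε) ≤ ε * t + (1 - ε) * τ :=
    Real.geom_mean_le_arith_mean2_weighted hε0.le (by linarith) ht hτ.le (by ring)
  have hτε : τ = τ ^ ε * τ ^ (1 - ε) := by
    rw [← Real.rpow_add hτ]; norm_num
  have h1 : τ * t ^ ε = τ ^ ε * (t ^ ε * τ ^ (1 - ε)) := by
    conv_lhs => rw [hτε]
    ring
  rw [h1]
  refine le_trans (mul_le_mul_of_nonneg_left hgm (by positivity))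
    (mul_le_mul_of_nonneg_left (by nlinarith) (by positivity))

end Aux

/-- Let `T` be a bounded self-adjoint positive injective operator on a complex Hilbert space,
`τ > 0`, `s > 0`, `0 < ε ≤ 1/2`. Then `T + s • 1` and `T + (τ+s) • 1` are invertible and for
every `g`, `‖T^{1/2}(((T + s•1)⁻¹ − (T + (τ+s)•1)⁻¹)(T^ε g))‖ ≤ τ^ε ‖T^{1/2}((T + s•1)⁻¹ g)‖`,
where `T^{1/2} = cfc Real.sqrt T` and `T^ε = cfc (t ↦ t^ε) T` are given by the continuous
functional calculus. -/
theorem weighted_resolvent_difference_bound {H : Type*} [NormedAddCommGroup H]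
    [InnerProductSpace ℂ H] [CompleteSpace H] (T : H →L[ℂ] H)
    (hT : IsSelfAdjoint T) (hpos : ∀ f : H, 0 ≤ (inner ℂ (T f) f : ℂ).re)
    (hinj : Function.Injective T) (τ s ε : ℝ) (hτ : 0 < τ) (hs : 0 < s)
    (hε0 : 0 < ε) (hε : ε ≤ 1 / 2) :
    IsUnit (T + s • (1 : H →L[ℂ] H)) ∧ IsUnit (T + (τ + s) • (1 : H →L[ℂ] H)) ∧
    ∀ g : H,
      ‖cfc Real.sqrt T
          ((Ring.inverse (T + s • (1 : H →L[ℂ] H)) -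
            Ring.inverse (T + (τ + s) • (1 : H →L[ℂ] H)))
            (cfc (fun t : ℝ => t ^ ε) T g))‖
        ≤ τ ^ ε * ‖cfc Real.sqrt T (Ring.inverse (T + s • (1 : H →L[ℂ] H)) g)‖ := by
  have hT0 : (0 : H →L[ℂ] H) ≤ T := by
    rw [ContinuousLinearMap.nonneg_iff_isPositive]
    exact ⟨hT.isSymmetric, hpos⟩
  have hS : ∀ t ∈ spectrum ℝ T, 0 ≤ t := fun t ht => spectrum_nonneg_of_nonneg hT0 ht
  obtain ⟨hu1, hinv1⟩ := wrd_inverse_eq T hT hS s hs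
  obtain ⟨hu2, hinv2⟩ := wrd_inverse_eq T hT hS (τ + s) (by positivity)
  refine ⟨hu1, hu2, fun g => ?_⟩
  -- notation for the scalar functions
  set q : ℝ → ℝ := Real.sqrt with hq
  set p : ℝ → ℝ := fun t => t ^ ε with hp
  set r1 : ℝ → ℝ := fun t => (t + s)⁻¹ with hr1
  set r2 : ℝ → ℝ := fun t => (t + (τ + s))⁻¹ with hr2
  have hne1 : ∀ t ∈ spectrum ℝ T, t + s ≠ 0 := fun t ht => by have := hS t ht; positivity
  have hne2 : ∀ t ∈ spectrum ℝ T, t + (τ + s) ≠ 0 := fun t ht => by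
    have := hS t ht; positivity
  have hcq : ContinuousOn q (spectrum ℝ T) := Real.continuous_sqrt.continuousOn
  have hcp : ContinuousOn p (spectrum ℝ T) :=
    (continuous_iff_continuousAt.mpr fun x =>
      Real.continuousAt_rpow_const x ε (Or.inr hε0.le)).continuousOn
  have hcr1 : ContinuousOn r1 (spectrum ℝ T) := ContinuousOn.inv₀ (by fun_prop) hne1
  have hcr2 : ContinuousOn r2 (spectrum ℝ T) := ContinuousOn.inv₀ (by fun_prop) hne2
  set h : ℝ → ℝ := fun t => τ * t ^ ε / (t + (τ + s)) with hh
  have hch : ContinuousOn h (spectrum ℝ T) :=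
    ContinuousOn.div (by exact (continuousOn_const.mul hcp)) (by fun_prop) hne2
  set G : ℝ → ℝ := fun t => q t * r1 t with hG
  have hcG : ContinuousOn G (spectrum ℝ T) := hcq.mul hcr1
  -- rewrite LHS as a single cfc applied to g
  have lhs_eq : cfc q T
      ((Ring.inverse (T + s • (1 : H →L[ℂ] H)) -
        Ring.inverse (T + (τ + s) • (1 : H →L[ℂ] H))) (cfc p T g))
      = cfc (fun t => q t * ((r1 t - r2 t) * p t)) T g := by
    rw [hinv1, hinv2, ← cfc_sub _ _ _ hcr1 hcr2]
    have : cfc q T ((cfc (fun t => r1 t - r2 t) T) (cfc p T g))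
        = (cfc q T * (cfc (fun t => r1 t - r2 t) T * cfc p T)) g := by
      simp [ContinuousLinearMap.mul_apply]
    rw [this, ← cfc_mul (fun t => r1 t - r2 t) p T (hcr1.sub hcr2) hcp,
      ← cfc_mul q (fun t => (r1 t - r2 t) * p t) T hcq ((hcr1.sub hcr2).mul hcp)]
  -- rewrite RHS inner vector
  have rhs_eq : cfc q T (Ring.inverse (T + s • (1 : H →L[ℂ] H)) g) = cfc G T g := by
    rw [hinv1]
    have : cfc q T ((cfc r1 T) g) = (cfc q T * cfc r1 T) g := by
      simp [ContinuousLinearMap.mul_apply]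
    rw [this, ← cfc_mul _ _ _ hcq hcr1]
  rw [lhs_eq, rhs_eq]
  -- factor the LHS function as h * G on the spectrum
  have factor : cfc (fun t => q t * ((r1 t - r2 t) * p t)) T = cfc h T * cfc G T := by
    rw [← cfc_mul _ _ _ hch hcG]
    refine cfc_congr fun t ht => ?_
    have h1 := hne1 t ht
    have h2 := hne2 t ht
    simp only [hq, hp, hr1, hr2, hh, hG]
    field_simp
    ring
  rw [factor]
  have happ : (cfc h T * cfc G T) g = cfc h T (cfc G T g) := rfl
  rw [happ]
  have hnorm : ‖cfc h T‖ ≤ τ ^ ε := by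
    refine norm_cfc_le (by positivity) fun t ht => ?_
    have ht0 := hS t ht
    rw [Real.norm_eq_abs, abs_of_nonneg (by positivity)]
    exact wrd_scalar_ineq τ s ε t hτ hs hε0 hε ht0
  calc ‖cfc h T (cfc G T g)‖ ≤ ‖cfc h T‖ * ‖cfc G T g‖ := (cfc h T).le_opNorm _
    _ ≤ τ ^ ε * ‖cfc G T g‖ := mul_le_mul_of_nonneg_right hnorm (norm_nonneg _)
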